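/- For 0 < α < 1 and n = 2m+1 an odd positive integer, the Hadamard finite-part integral f.p.∫_0^∞ x^{α-1-n}/(1+x²) dx equals (−1)^{m+1} (π/2)/cos(πα/2). -/

import Mathlib

open MeasureTheory Real Set Filter Topology


noncomputable def pc : ℕ → ℝ := fun n => if Even n then (-1 : ℝ) ^ (n / 2) else 0

lemma hasFPS : HasFPowerSeriesOnBall (fun x : ℝ => 1 / (1 + x ^ 2))
    (FormalMultilinearSeries.ofScalars ℝ pc) 0 1 := by
  constructor
  · have : ((1 : NNReal) : ENNReal) ≤ (FormalMultilinearSeries.ofScalars ℝ pc).radius := by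
      apply FormalMultilinearSeries.le_radius_of_bound _ 1
      intro n
      rw [FormalMultilinearSeries.ofScalars_norm]
      simp only [pc]
      rcases Nat.even_or_odd n with h | h
      · simp [h, abs_pow]
      · simp [Nat.not_even_iff_odd.mpr h]
    simpa using this
  · norm_num
  · intro y hy
    rw [EMetric.mem_ball, edist_zero_right, ← ENNReal.coe_one, enorm_eq_nnnorm, ENNReal.coe_lt_coe] at hy
    replace hy : ‖y‖ < 1 := by exact_mod_cast hy
    simp only [FormalMultilinearSeries.ofScalars_apply_eq, smul_eq_mul, zero_add]
    have hy2 : ‖-y ^ 2‖ < 1 := by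
      rw [norm_neg, norm_pow]
      calc ‖y‖ ^ 2 ≤ ‖y‖ * 1 := by
            rw [sq]; exact mul_le_mul_of_nonneg_left hy.le (norm_nonneg y)
        _ < 1 := by simpa using hy
    have hgeom : HasSum (fun j : ℕ => (-y ^ 2) ^ j) (1 / (1 + y ^ 2)) := by
      have := hasSum_geometric_of_norm_lt_one hy2
      have h1 : (1 : ℝ) - -y ^ 2 = 1 + y ^ 2 := by ring
      rw [h1, inv_eq_one_div] at this
      exact this
    have hinj : Function.Injective (fun j : ℕ => 2 * j) := fun a b h => by simpa using h
    rw [← Function.Injective.hasSum_iff hinj]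
    · convert hgeom using 1
      · rfl
      ext j
      simp only [Function.comp_apply, pc]
      rw [if_pos (even_two_mul j)]
      have : 2 * j / 2 = j := by omega
      rw [this, neg_pow, pow_mul]
      ring
    · intro k hk
      have : ¬ Even k := by
        simp only [Set.mem_range, not_exists] at hk
        rintro ⟨j, rfl⟩
        exact hk j (by omega)
      simp [pc, this]

lemma iterderiv_val (k : ℕ) : iteratedDeriv k (fun x : ℝ => 1 / (1 + x ^ 2)) 0
    = pc k * k.factorial := by
  rw [iteratedDeriv_eq_iteratedFDeriv, ← hasFPS.factorial_smul 1 k]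
  have : (FormalMultilinearSeries.ofScalars ℝ pc k) (fun _ => (1:ℝ)) = pc k := by
    rw [FormalMultilinearSeries.ofScalars_apply_eq]; simp
  rw [this, nsmul_eq_mul, mul_comm]

-- reindexing lemma
lemma sum_even (g : ℕ → ℝ) (hg : ∀ k, ¬ Even k → g k = 0) (m : ℕ) :
    ∑ k ∈ Finset.range (2 * m + 1), g k = ∑ j ∈ Finset.range (m + 1), g (2 * j) := by
  induction m with
  | zero => simp
  | succ m ih =>
    have h1 : 2 * (m + 1) + 1 = (2 * m + 1) + 1 + 1 := by ring
    rw [h1, Finset.sum_range_succ, Finset.sum_range_succ, ih, Finset.sum_range_succ,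
      hg (2 * m + 1) (by simp [Nat.even_iff])]
    have h2 : 2 * m + 1 + 1 = 2 * (m + 1) := by ring
    rw [h2]
    simp [Finset.sum_range_succ]

-- part C: tendsto of tail integrals
lemma tendsto_tail (g : ℝ → ℝ) (hc : Continuous g) (hint : IntegrableOn g (Ioi 0)) :
    Tendsto (fun e => ∫ x in Ioi e, g x) (𝓝[>] (0:ℝ)) (𝓝 (∫ x in Ioi (0:ℝ), g x)) := by
  have key : ∀ e : ℝ, 0 < e → (∫ x in Ioi e, g x) = (∫ x in Ioi (0:ℝ), g x) - ∫ x in (0:ℝ)..e, g x := by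
    intro e he
    have hsplit : (∫ x in Ioi (0:ℝ), g x) = (∫ x in Ioc 0 e, g x) + ∫ x in Ioi e, g x := by
      rw [← setIntegral_union (Ioc_disjoint_Ioi le_rfl) measurableSet_Ioi
        (hint.mono_set Ioc_subset_Ioi_self) (hint.mono_set (Ioi_subset_Ioi he.le)),
        Ioc_union_Ioi_eq_Ioi he.le]
    rw [intervalIntegral.integral_of_le he.le]
    linarith [hsplit]
  have hcont : Tendsto (fun e => ∫ x in (0:ℝ)..e, g x) (𝓝[>] 0) (𝓝 0) := by
    have := (intervalIntegral.continuous_primitive (μ := volume) (fun a b => hc.intervalIntegrable a b) 0).tendsto 0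
    simpa using this.mono_left nhdsWithin_le_nhds
  have := (tendsto_const_nhds (x := ∫ x in Ioi (0:ℝ), g x) (f := 𝓝[>] (0:ℝ))).sub hcont
  simp only [sub_zero] at this
  exact this.congr' (by filter_upwards [self_mem_nhdsWithin] with e he using (key e he).symm)

lemma g_cont {α : ℝ} (hα0 : 0 < α) : Continuous (fun x : ℝ => x ^ α / (1 + x ^ 2)) := by
  apply Continuous.div
  · rw [continuous_iff_continuousAt]
    intro x
    exact Real.continuousAt_rpow_const x α
      (Or.inr hα0.le)
  · continuity
  · intro x; positivity

lemma g_int {α : ℝ} (hα0 : 0 < α) (hα1 : α < 1) :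
    IntegrableOn (fun x : ℝ => x ^ α / (1 + x ^ 2)) (Ioi 0) := by
  rw [← Ioc_union_Ioi_eq_Ioi (zero_le_one (α := ℝ)), integrableOn_union]
  constructor
  · exact ((g_cont hα0).continuousOn.integrableOn_Icc).mono_set Ioc_subset_Icc_self
  · apply Integrable.mono' (g := fun x => x ^ (α - 2))
      (integrableOn_Ioi_rpow_of_lt (by linarith) one_pos)
      ((g_cont hα0).aestronglyMeasurable.restrict)
    filter_upwards [ae_restrict_mem measurableSet_Ioi] with x hx
    have hx1 : (1:ℝ) < x := hx
    have hx0 : (0:ℝ) < x := by linarith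
    have h2 : x ^ (α - 2) = x ^ α / x ^ 2 := by
      rw [rpow_sub hx0, show (2:ℝ) = ((2:ℕ):ℝ) by norm_num, rpow_natCast]
    rw [Real.norm_eq_abs, abs_of_nonneg (by positivity), h2]
    gcongr <;> nlinarith [rpow_nonneg hx0.le α]

lemma pointwise (b : ℝ) (m : ℕ) (x : ℝ) (hx : 0 < x) :
    x ^ b / (1 + x ^ 2) =
      (∑ j ∈ Finset.range (m + 1), (-1 : ℝ) ^ j * x ^ (b + 2 * (j:ℝ))) +
        (-1) ^ (m + 1) * (x ^ (b + (2 * (m:ℝ) + 2)) / (1 + x ^ 2)) := by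
  have hd : (0:ℝ) < 1 + x ^ 2 := by positivity
  have hterm : ∀ j : ℕ, (-1 : ℝ) ^ j * x ^ (b + 2 * (j:ℝ)) = x ^ b * (-x ^ 2) ^ j := by
    intro j
    rw [rpow_add hx, show (2 * (j:ℝ)) = ((2 * j : ℕ) : ℝ) by push_cast; ring,
      rpow_natCast, pow_mul, neg_pow]
    ring
  have hgeo : ∑ j ∈ Finset.range (m + 1), (-x ^ 2 : ℝ) ^ j
      = (1 - (-x ^ 2) ^ (m + 1)) / (1 + x ^ 2) := by
    rw [geom_sum_eq (by nlinarith : (-x ^ 2 : ℝ) ≠ 1)]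
    rw [div_eq_div_iff (by nlinarith) (by positivity)]
    ring
  have hlast : x ^ (b + (2 * (m:ℝ) + 2)) = x ^ b * x ^ (2 * (m + 1)) := by
    rw [rpow_add hx, show (2 * (m:ℝ) + 2) = ((2 * (m + 1) : ℕ) : ℝ) by push_cast; ring,
      rpow_natCast]
  have hneg : (-x ^ 2 : ℝ) ^ (m + 1) = (-1) ^ (m + 1) * x ^ (2 * (m + 1)) := by
    rw [neg_pow, pow_mul]
  simp only [hterm, hlast]
  rw [← Finset.mul_sum, hgeo, hneg]
  field_simp
  ring

lemma main_eq {α : ℝ} (hα0 : 0 < α) (hα1 : α < 1) (m : ℕ) {e : ℝ} (he : 0 < e) :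
    (∫ x in Ioi e, x ^ (α - 1 - (2 * m + 1 : ℕ)) / (1 + x ^ 2)) -
      ∑ k ∈ Finset.range (2 * m + 1),
        e ^ (α - (2 * m + 1 : ℕ) + k) * iteratedDeriv k (fun x : ℝ => 1 / (1 + x ^ 2)) 0 /
          ((k.factorial : ℝ) * (((2 * m + 1 : ℕ) : ℝ) - α - k)) =
      (-1) ^ (m + 1) * ∫ x in Ioi e, x ^ α / (1 + x ^ 2) := by
  set b : ℝ := α - 1 - (2 * m + 1 : ℕ) with hb
  have hb2 : ∀ j : ℕ, j ≤ m → b + 2 * (j:ℝ) < -1 := by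
    intro j hj
    have : (j:ℝ) ≤ (m:ℝ) := by exact_mod_cast hj
    rw [hb]; push_cast; linarith
  have hp : ∀ j : ℕ, j ≤ m → b + 2 * (j:ℝ) + 1 ≠ 0 := by
    intro j hj; have := hb2 j hj; linarith
  -- sum simplification
  have hsum : (∑ k ∈ Finset.range (2 * m + 1),
      e ^ (α - (2 * m + 1 : ℕ) + k) * iteratedDeriv k (fun x : ℝ => 1 / (1 + x ^ 2)) 0 /
        ((k.factorial : ℝ) * (((2 * m + 1 : ℕ) : ℝ) - α - k)))
      = ∑ j ∈ Finset.range (m + 1),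
          (-1:ℝ)^j * (-e ^ (b + 2 * (j:ℝ) + 1) / (b + 2 * (j:ℝ) + 1)) := by
    rw [sum_even _ (fun k hk => by rw [iterderiv_val]; simp [pc, hk]) m]
    apply Finset.sum_congr rfl
    intro j hj
    have hjm : j ≤ m := by
      have := Finset.mem_range.mp hj; omega
    rw [iterderiv_val]
    have hpc : pc (2 * j) = (-1:ℝ)^j := by
      simp only [pc, if_pos (even_two_mul j)]
      congr 1; omega
    have hexp : α - ((2 * m + 1 : ℕ):ℝ) + ((2 * j : ℕ):ℝ) = b + 2 * (j:ℝ) + 1 := by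
      rw [hb]; push_cast; ring
    have hden : ((2 * m + 1 : ℕ):ℝ) - α - ((2 * j : ℕ):ℝ) = -(b + 2 * (j:ℝ) + 1) := by
      rw [hb]; push_cast; ring
    rw [hpc, hexp, hden]
    have hK : ((2 * j).factorial : ℝ) ≠ 0 := Nat.cast_ne_zero.mpr (Nat.factorial_ne_zero _)
    have hpj := hp j hjm
    rw [← mul_div_assoc, div_eq_div_iff (mul_ne_zero hK (neg_ne_zero.mpr hpj)) hpj]
    ring
  -- integral decomposition
  have hint2 : IntegrableOn (fun x : ℝ => x ^ α / (1 + x ^ 2)) (Ioi e) :=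
    (g_int hα0 hα1).mono_set (Ioi_subset_Ioi he.le)
  have hint1 : ∀ j : ℕ, j ∈ Finset.range (m + 1) →
      IntegrableOn (fun x : ℝ => (-1:ℝ)^j * x ^ (b + 2 * (j:ℝ))) (Ioi e) := by
    intro j hj
    exact (integrableOn_Ioi_rpow_of_lt (hb2 j (by have := Finset.mem_range.mp hj; omega)) he).const_mul _
  have hIsum : IntegrableOn
      (fun x : ℝ => ∑ j ∈ Finset.range (m + 1), (-1:ℝ)^j * x ^ (b + 2 * (j:ℝ))) (Ioi e) :=
    integrable_finset_sum _ hint1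
  have hba : b + (2 * (m:ℝ) + 2) = α := by rw [hb]; push_cast; ring
  have hint_eq : (∫ x in Ioi e, x ^ b / (1 + x ^ 2))
      = (∑ j ∈ Finset.range (m + 1),
          (-1:ℝ)^j * (-e ^ (b + 2 * (j:ℝ) + 1) / (b + 2 * (j:ℝ) + 1))) +
        (-1:ℝ) ^ (m + 1) * ∫ x in Ioi e, x ^ α / (1 + x ^ 2) := by
    have hcong : (∫ x in Ioi e, x ^ b / (1 + x ^ 2))
        = ∫ x in Ioi e, ((∑ j ∈ Finset.range (m + 1), (-1:ℝ)^j * x ^ (b + 2 * (j:ℝ))) +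
            (-1:ℝ) ^ (m + 1) * (x ^ α / (1 + x ^ 2))) := by
      apply setIntegral_congr_fun measurableSet_Ioi
      intro x hx
      have := pointwise b m x (lt_trans he hx)
      rw [hba] at this
      exact this
    rw [hcong, integral_add hIsum (hint2.const_mul _), integral_finset_sum _ hint1,
      integral_const_mul]
    congr 1
    apply Finset.sum_congr rfl
    intro j hj
    rw [integral_const_mul, integral_Ioi_rpow_of_lt
      (hb2 j (by have := Finset.mem_range.mp hj; omega)) he]
  rw [hsum, hint_eq]
  ring


lemma beta_val {s : ℝ} (hs0 : 0 < s) (hs1 : s < 1) :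
    ∫ t in (0:ℝ)..1, t ^ (s - 1) * (1 - t) ^ (-s) = π / Real.sin (π * s) := by
  have h1 : Complex.betaIntegral s (1 - s) = ((π / Real.sin (π * s) : ℝ) : ℂ) := by
    have h2 := Complex.Gamma_mul_Gamma_eq_betaIntegral
      (s := (s:ℂ)) (t := (1 - s : ℂ)) (by simpa using hs0) (by simp [hs1])
    rw [show (s:ℂ) + (1 - s : ℂ) = 1 by ring, Complex.Gamma_one, one_mul] at h2
    rw [← h2, Complex.Gamma_mul_Gamma_one_sub]
    push_cast [Complex.ofReal_sin]
    norm_num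
  have h3 : Complex.betaIntegral s (1 - s)
      = ((∫ t in (0:ℝ)..1, t ^ (s - 1) * (1 - t) ^ (-s) : ℝ) : ℂ) := by
    rw [Complex.betaIntegral, ← intervalIntegral.integral_ofReal]
    apply intervalIntegral.integral_congr
    intro t ht
    rw [uIcc_of_le zero_le_one] at ht
    simp only
    rw [Complex.ofReal_mul, Complex.ofReal_cpow ht.1,
      Complex.ofReal_cpow (by linarith [ht.2] : (0:ℝ) ≤ 1 - t)]
    push_cast
    ring_nf
  have := h3.symm.trans h1
  exact_mod_cast this

lemma integral_value {α : ℝ} (hα0 : 0 < α) (hα1 : α < 1) :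
    (∫ x in Ioi (0:ℝ), x ^ α / (1 + x ^ 2)) = π / 2 / Real.cos (π * α / 2) := by
  set s : ℝ := (α + 1) / 2 with hs
  have hs0 : 0 < s := by rw [hs]; linarith
  have hs1 : s < 1 := by rw [hs]; linarith
  -- D1: substitution y = x^2
  have D1 : (∫ x in Ioi (0:ℝ), x ^ α / (1 + x ^ 2))
      = ∫ y in Ioi (0:ℝ), (1/2 : ℝ) * (y ^ (s - 1) / (1 + y)) := by
    rw [← integral_comp_rpow_Ioi (fun y => (1/2 : ℝ) * (y ^ (s - 1) / (1 + y))) (two_ne_zero)]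
    apply setIntegral_congr_fun measurableSet_Ioi
    intro x hx
    have hx0 : (0:ℝ) < x := hx
    have h2 : x ^ ((2:ℝ)) = x ^ (2:ℕ) := by
      rw [← rpow_natCast x 2]; norm_num
    have h3 : ((x ^ (2:ℕ) : ℝ)) ^ (s - 1) = x ^ (α - 1) := by
      rw [← rpow_natCast x 2, ← Real.rpow_mul hx0.le]
      congr 1
      rw [hs]; push_cast; ring
    have h4 : x ^ ((2:ℝ) - 1) = x := by
      norm_num
    have h5 : x * x ^ (α - 1) = x ^ α := by
      have h6 := (Real.rpow_add hx0 1 (α - 1)).symm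
      rw [Real.rpow_one] at h6
      rw [h6]; norm_num
    simp only [smul_eq_mul, h2, h3, h4]
    rw [abs_of_nonneg (by norm_num : (0:ℝ) ≤ 2), ← h5]
    ring
  -- D2: substitution y = t / (1 - t)
  have D2 : (∫ y in Ioi (0:ℝ), y ^ (s - 1) / (1 + y))
      = ∫ t in Ioo (0:ℝ) 1, t ^ (s - 1) * (1 - t) ^ (-s) := by
    have himg : (fun t : ℝ => t / (1 - t)) '' Ioo 0 1 = Ioi 0 := by
      ext y
      constructor
      · rintro ⟨t, ⟨ht0, ht1⟩, rfl⟩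
        exact div_pos ht0 (by linarith)
      · intro hy
        have hy0 : (0:ℝ) < y := hy
        refine ⟨y / (1 + y), ⟨div_pos hy0 (by linarith), ?_⟩, ?_⟩
        · rw [div_lt_one (by linarith)]; linarith
        · field_simp; ring
    have hderiv : ∀ t ∈ Ioo (0:ℝ) 1, HasDerivWithinAt (fun t : ℝ => t / (1 - t))
        ((1 - t)⁻¹ ^ 2) (Ioo 0 1) t := by
      intro t ht
      have h1t : (1:ℝ) - t ≠ 0 := by have := ht.2; intro h; simp only [sub_eq_zero] at h; linarith
      have := ((hasDerivAt_id t).div ((hasDerivAt_id t).const_sub 1) h1t).hasDerivWithinAt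
        (s := Ioo (0:ℝ) 1)
      refine this.congr_deriv ?_
      simp only [id]
      field_simp
      ring
    have hinj : InjOn (fun t : ℝ => t / (1 - t)) (Ioo 0 1) := by
      intro a ha b hb hab
      have ha1 : (1:ℝ) - a ≠ 0 := by have := ha.2; intro h; simp only [sub_eq_zero] at h; linarith
      have hb1 : (1:ℝ) - b ≠ 0 := by have := hb.2; intro h; simp only [sub_eq_zero] at h; linarith
      simp only at hab
      rw [div_eq_div_iff ?_ ?_] at hab
      · nlinarith [hab]
      · cases (sub_ne_zero.mp ha1).lt_or_gt <;> [linarith [ha.2]; linarith [ha.2]]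
      · cases (sub_ne_zero.mp hb1).lt_or_gt <;> [linarith [hb.2]; linarith [hb.2]]
    have := MeasureTheory.integral_image_eq_integral_abs_deriv_smul measurableSet_Ioo hderiv hinj
      (fun y => y ^ (s - 1) / (1 + y))
    rw [himg] at this
    rw [this]
    apply setIntegral_congr_fun measurableSet_Ioo
    intro t ht
    have ht0 : (0:ℝ) < t := ht.1
    have ht1 : (0:ℝ) < 1 - t := by linarith [ht.2]
    have h1 : (1:ℝ) + t / (1 - t) = 1 / (1 - t) := by field_simp; ring
    have h2 : (t / (1 - t)) ^ (s - 1) = t ^ (s - 1) / (1 - t) ^ (s - 1) :=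
      Real.div_rpow ht0.le ht1.le _
    have h3 : (1 - t) ^ (s - 1) * (1 - t) = (1 - t) ^ s := by
      have h4 := (Real.rpow_add ht1 (s - 1) 1).symm
      rw [Real.rpow_one, show s - 1 + 1 = s by ring] at h4
      exact h4
    simp only
    rw [smul_eq_mul, h1, h2, abs_of_nonneg (by positivity), Real.rpow_neg ht1.le, ← h3]
    have h5 : (1 - t) ^ (s - 1) ≠ 0 := (Real.rpow_pos_of_pos ht1 _).ne'
    field_simp
  have hcos : (0:ℝ) < Real.cos (π * α / 2) := by
    apply Real.cos_pos_of_mem_Ioo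
    constructor
    · nlinarith [pi_pos]
    · nlinarith [pi_pos]
  have hsin : Real.sin (π * s) = Real.cos (π * α / 2) := by
    rw [hs, show π * ((α + 1) / 2) = π * α / 2 + π / 2 by ring, Real.sin_add_pi_div_two]
  rw [D1, integral_const_mul, D2, ← MeasureTheory.integral_Ioc_eq_integral_Ioo,
    ← intervalIntegral.integral_of_le zero_le_one, beta_val hs0 hs1, hsin]
  field_simp

theorem stmt_10 (α : ℝ) (hα0 : 0 < α) (hα1 : α < 1) (m : ℕ) :
    Tendsto (fun e : ℝ =>
        (∫ x in Ioi e, x ^ (α - 1 - (2 * m + 1 : ℕ)) / (1 + x ^ 2)) -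
          ∑ k ∈ Finset.range (2 * m + 1),
            e ^ (α - (2 * m + 1 : ℕ) + k) *
              iteratedDeriv k (fun x : ℝ => 1 / (1 + x ^ 2)) 0 /
                ((k.factorial : ℝ) * (((2 * m + 1 : ℕ) : ℝ) - α - k)))
      (𝓝[>] 0)
      (𝓝 ((-1) ^ (m + 1) * (Real.pi / 2) / Real.cos (Real.pi * α / 2))) := by
  have hlim : Tendsto (fun e : ℝ => (-1:ℝ) ^ (m + 1) * ∫ x in Ioi e, x ^ α / (1 + x ^ 2))
      (𝓝[>] (0:ℝ)) (𝓝 ((-1) ^ (m + 1) * (π / 2) / Real.cos (π * α / 2))) := by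
    have h1 := (tendsto_tail _ (g_cont hα0) (g_int hα0 hα1)).const_mul ((-1:ℝ) ^ (m + 1))
    rw [integral_value hα0 hα1] at h1
    convert h1 using 2
    ring
  apply hlim.congr'
  filter_upwards [self_mem_nhdsWithin] with e he
  exact (main_eq hα0 hα1 m he).symm
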